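/- (Time-space harmonic polynomials for random walks.) Let (M_k)_{k≥1} be independent, identically distributed real-valued random variables on a probability space with E[|M_1|^j] < ∞ for every j ≥ 1, set S_0 = 0 and S_n = M_1 + ⋯ + M_n, let a_j = E[M_1^j] (a_0 = 1), and let (F_n)_{n≥0} be the natural filtration of the process (S_n). For an integer t define q_0(t) = 1 and q_j(t) = ∑_{λ ⊢ j} (t)_{ν_λ} d_λ a_λ for j ≥ 1, and for each i ≥ 1 define the polynomial Q_i(x, n) = ∑_{j=0}^{i} binom(i,j) q_{i−j}(−n) x^j. Then for every i ≥ 1 the process (Q_i(S_n, n))_{n≥0} is a martingale with respect to (F_n); in particular, E[Q_i(S_n, n) | F_s] = Q_i(S_s, s) almost surely for all 0 ≤ s ≤ n, and E[Q_i(S_n, n)] = 0 for all n ≥ 1. -/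

import Mathlib

open MeasureTheory ProbabilityTheory Finset Polynomial

/-- `dcoef λ = j! / ((1!)^{r_1}(2!)^{r_2}⋯ r_1! r_2! ⋯)`, the number of set partitions of a
`j`-element set whose block sizes are the parts of the integer partition `λ`. -/
noncomputable def dcoef {j : ℕ} (lam : Nat.Partition j) : ℝ :=
  (Nat.factorial j : ℝ) /
    ((lam.parts.map fun p => (Nat.factorial p : ℝ)).prod *
     ∏ r ∈ lam.parts.toFinset, (Nat.factorial (lam.parts.count r) : ℝ))

lemma descPoch_eval_add_one (k : ℕ) (x : ℝ) :
    (descPochhammer ℝ k).eval (x + 1)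
      = (descPochhammer ℝ k).eval x + k * (descPochhammer ℝ (k - 1)).eval x := by
  cases k with
  | zero => simp
  | succ n =>
    have h1 : (descPochhammer ℝ (n + 1)).eval (x + 1)
        = (x + 1) * (descPochhammer ℝ n).eval x := by
      rw [descPochhammer_succ_left]
      simp [eval_comp]
    rw [h1, descPochhammer_succ_eval, Nat.add_sub_cancel]
    push_cast
    ring

lemma prod_count_factorial_cons (r : ℕ) (s : Multiset ℕ) :
    (∏ p ∈ (r ::ₘ s).toFinset, (Nat.factorial ((r ::ₘ s).count p) : ℝ))
      = ((s.count r : ℝ) + 1) * ∏ p ∈ s.toFinset, (Nat.factorial (s.count p) : ℝ) := by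
  rw [Multiset.toFinset_cons]
  by_cases hr : r ∈ s.toFinset
  · rw [Finset.insert_eq_self.2 hr]
    rw [← Finset.mul_prod_erase _ _ hr,
      ← Finset.mul_prod_erase _ (fun p => (Nat.factorial (s.count p) : ℝ)) hr]
    have hcount : ∀ p ∈ s.toFinset.erase r,
        (Nat.factorial ((r ::ₘ s).count p) : ℝ) = (Nat.factorial (s.count p) : ℝ) := by
      intro p hp
      rw [Multiset.count_cons_of_ne (Finset.ne_of_mem_erase hp)]
    rw [Finset.prod_congr rfl hcount, Multiset.count_cons_self, Nat.factorial_succ]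
    push_cast
    ring
  · rw [Finset.prod_insert hr, Multiset.count_cons_self]
    have h0 : s.count r = 0 := by
      rw [Multiset.count_eq_zero]
      intro h; exact hr (Multiset.mem_toFinset.2 h)
    have hcount : ∀ p ∈ s.toFinset,
        (Nat.factorial ((r ::ₘ s).count p) : ℝ) = (Nat.factorial (s.count p) : ℝ) := by
      intro p hp
      rw [Multiset.count_cons_of_ne (by rintro rfl; exact hr hp)]
    rw [Finset.prod_congr rfl hcount, h0]
    norm_num [Nat.factorial]

lemma dcoef_cons {m r : ℕ} (hrm : r ≤ m) (mu : Nat.Partition (m - r))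
    (lam : Nat.Partition m) (hlam : lam.parts = r ::ₘ mu.parts) :
    (lam.parts.count r : ℝ) * dcoef lam = (m.choose r : ℝ) * dcoef mu := by
  unfold dcoef
  rw [hlam, Multiset.map_cons, Multiset.prod_cons, prod_count_factorial_cons,
    Multiset.count_cons_self, Nat.cast_choose ℝ hrm]
  set c : ℝ := (mu.parts.count r : ℝ) with hc
  have hc0 : 0 ≤ c := by positivity
  set A : ℝ := (mu.parts.map fun p => (Nat.factorial p : ℝ)).prod with hA
  set B : ℝ := ∏ p ∈ mu.parts.toFinset, (Nat.factorial (mu.parts.count p) : ℝ) with hB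
  have hApos : 0 < A := by
    rw [hA]
    apply Multiset.prod_pos
    intro x hx
    obtain ⟨p, _, rfl⟩ := Multiset.mem_map.1 hx
    positivity
  have hBpos : 0 < B := by
    rw [hB]; exact Finset.prod_pos fun p _ => by positivity
  have h1 : (Nat.factorial r : ℝ) ≠ 0 := by positivity
  have h2 : (Nat.factorial (m - r) : ℝ) ≠ 0 := by positivity
  push_cast
  field_simp
  ring

/-- Remove one part from a partition. -/
def erasePart {m : ℕ} (lam : Nat.Partition m) (r : ℕ) (h : r ∈ lam.parts) :
    Nat.Partition (m - r) where
  parts := lam.parts.erase r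
  parts_pos := fun hi => lam.parts_pos (Multiset.mem_of_mem_erase hi)
  parts_sum := by
    have h1 : r + (lam.parts.erase r).sum = m := by
      rw [← Multiset.sum_cons, Multiset.cons_erase h, lam.parts_sum]
    omega

/-- Add one part to a partition. -/
def consPart {m r : ℕ} (h1 : 0 < r) (h2 : r ≤ m) (mu : Nat.Partition (m - r)) :
    Nat.Partition m where
  parts := r ::ₘ mu.parts
  parts_pos := by
    intro i hi
    rcases Multiset.mem_cons.1 hi with rfl | hi
    · exact h1
    · exact mu.parts_pos hi
  parts_sum := by rw [Multiset.sum_cons, mu.parts_sum]; omega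

lemma mem_le_of_partition {m : ℕ} (lam : Nat.Partition m) {r : ℕ} (hr : r ∈ lam.parts) :
    r ≤ m :=
  lam.parts_sum ▸ Multiset.single_le_sum (fun y _ => Nat.zero_le y) _ hr

lemma consPart_erasePart {m : ℕ} (lam : Nat.Partition m) (r : ℕ) (hr : r ∈ lam.parts)
    (h1 : 0 < r) (h2 : r ≤ m) :
    consPart h1 h2 (erasePart lam r hr) = lam :=
  Nat.Partition.ext (Multiset.cons_erase hr)

lemma erasePart_consPart {m r : ℕ} (h1 : 0 < r) (h2 : r ≤ m) (mu : Nat.Partition (m - r))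
    (hr : r ∈ (consPart h1 h2 mu).parts) :
    erasePart (consPart h1 h2 mu) r hr = mu :=
  Nat.Partition.ext (Multiset.erase_cons_head r mu.parts)

lemma term_eq {m : ℕ} (a : ℕ → ℝ) (x : ℝ) (lam : Nat.Partition m) (r : ℕ)
    (hr : r ∈ lam.parts) :
    (lam.parts.count r : ℝ) *
      ((descPochhammer ℝ (lam.parts.card - 1)).eval x * dcoef lam * (lam.parts.map a).prod)
    = (m.choose r : ℝ) * a r *
      ((descPochhammer ℝ (erasePart lam r hr).parts.card).eval x * dcoef (erasePart lam r hr) *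
        ((erasePart lam r hr).parts.map a).prod) := by
  set mu := erasePart lam r hr with hmu
  have hparts : lam.parts = r ::ₘ mu.parts := (Multiset.cons_erase hr).symm
  have hcard : lam.parts.card - 1 = mu.parts.card := by rw [hparts]; simp
  have hprod : (lam.parts.map a).prod = a r * (mu.parts.map a).prod := by
    rw [hparts]; simp
  have hd := dcoef_cons (mem_le_of_partition lam hr) mu lam hparts
  rw [hcard, hprod]
  linear_combination
    ((descPochhammer ℝ mu.parts.card).eval x * a r * (mu.parts.map a).prod) * hd

lemma qpoly_step (a : ℕ → ℝ) (ha0 : a 0 = 1) (m : ℕ) (x : ℝ) :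
    (∑ lam : Nat.Partition m,
        (descPochhammer ℝ lam.parts.card).eval (x + 1) * dcoef lam * (lam.parts.map a).prod)
      = ∑ r ∈ Finset.range (m + 1), (m.choose r : ℝ) * a r *
          ∑ mu : Nat.Partition (m - r),
            (descPochhammer ℝ mu.parts.card).eval x * dcoef mu * (mu.parts.map a).prod := by
  have hL : (∑ lam : Nat.Partition m,
        (descPochhammer ℝ lam.parts.card).eval (x + 1) * dcoef lam * (lam.parts.map a).prod)
      = (∑ lam : Nat.Partition m,
          (descPochhammer ℝ lam.parts.card).eval x * dcoef lam * (lam.parts.map a).prod)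
        + ∑ lam : Nat.Partition m, ∑ r ∈ lam.parts.toFinset,
            (lam.parts.count r : ℝ) *
              ((descPochhammer ℝ (lam.parts.card - 1)).eval x * dcoef lam *
                (lam.parts.map a).prod) := by
    rw [← Finset.sum_add_distrib]
    refine Finset.sum_congr rfl fun lam _ => ?_
    have hcard : (lam.parts.card : ℝ) = ∑ r ∈ lam.parts.toFinset, (lam.parts.count r : ℝ) := by
      rw [← Nat.cast_sum, Multiset.toFinset_sum_count_eq]
    rw [descPoch_eval_add_one, ← Finset.sum_mul, ← hcard]
    ring
  rw [hL]
  have h0mem : (0 : ℕ) ∈ Finset.range (m + 1) := Finset.mem_range.2 (Nat.succ_pos m)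
  rw [← Finset.add_sum_erase _ _ h0mem]
  have herase : (Finset.range (m + 1)).erase 0 = Finset.Icc 1 m := by
    ext k
    simp only [Finset.mem_erase, Finset.mem_range, Finset.mem_Icc, Nat.lt_succ_iff]
    omega
  rw [herase]
  congr 1
  · simp [ha0]
  simp_rw [Finset.mul_sum]
  rw [Finset.sum_sigma']
  rw [Finset.sum_sigma' (Finset.Icc 1 m)
    (fun r => (Finset.univ : Finset (Nat.Partition (m - r))))
    (fun r mu => (m.choose r : ℝ) * a r *
      ((descPochhammer ℝ mu.parts.card).eval x * dcoef mu * (mu.parts.map a).prod))]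
  refine Finset.sum_bij'
    (fun p hp => ⟨p.2, erasePart p.1 p.2 (Multiset.mem_toFinset.1 (Finset.mem_sigma.1 hp).2)⟩)
    (fun p hp =>
      ⟨consPart (Finset.mem_Icc.1 (Finset.mem_sigma.1 hp).1).1
        (Finset.mem_Icc.1 (Finset.mem_sigma.1 hp).1).2 p.2, p.1⟩)
    ?_ ?_ ?_ ?_ ?_
  · rintro ⟨lam, r⟩ hp
    have hr : r ∈ lam.parts := Multiset.mem_toFinset.1 (Finset.mem_sigma.1 hp).2
    refine Finset.mem_sigma.2 ⟨Finset.mem_Icc.2 ⟨lam.parts_pos hr, mem_le_of_partition lam hr⟩,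
      Finset.mem_univ _⟩
  · rintro ⟨r, mu⟩ hp
    exact Finset.mem_sigma.2 ⟨Finset.mem_univ _,
      Multiset.mem_toFinset.2 (Multiset.mem_cons_self _ _)⟩
  · rintro ⟨lam, r⟩ hp
    simp only
    rw [consPart_erasePart]
  · rintro ⟨r, mu⟩ hp
    simp only
    rw [erasePart_consPart]
  · rintro ⟨lam, r⟩ hp
    exact term_eq a x lam r (Multiset.mem_toFinset.1 (Finset.mem_sigma.1 hp).2)

lemma key_identity (a : ℕ → ℝ) (q : ℤ → ℕ → ℝ)
    (hstep : ∀ (t : ℤ) (m : ℕ),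
      q (t + 1) m = ∑ r ∈ Finset.range (m + 1), (m.choose r : ℝ) * a r * q t (m - r))
    (i : ℕ) (t : ℤ) (y : ℝ) :
    ∑ j ∈ Finset.range (i + 1), ∑ k ∈ Finset.range (j + 1),
      (i.choose j : ℝ) * q (t - 1) (i - j) * ((j.choose k : ℝ) * a (j - k)) * y ^ k
    = ∑ k ∈ Finset.range (i + 1), (i.choose k : ℝ) * q t (i - k) * y ^ k := by
  have hcomm := Finset.sum_Ico_Ico_comm 0 (i + 1)
    (fun k j => (i.choose j : ℝ) * q (t - 1) (i - j) * ((j.choose k : ℝ) * a (j - k)) * y ^ k)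
  simp only [Finset.range_eq_Ico] at *
  rw [← hcomm]
  refine Finset.sum_congr rfl fun k hk => ?_
  have hki : k ≤ i := by simp only [Finset.mem_Ico] at hk; omega
  rw [Finset.sum_Ico_eq_sum_range]
  have hlen : i + 1 - k = (i - k) + 1 := by omega
  rw [hlen]
  have hterm : ∀ r ∈ Finset.range ((i - k) + 1),
      (i.choose (k + r) : ℝ) * q (t - 1) (i - (k + r)) * (((k + r).choose k : ℝ) * a ((k + r) - k))
        * y ^ k
      = (i.choose k : ℝ) * y ^ k * (((i - k).choose r : ℝ) * a r * q (t - 1) ((i - k) - r)) := by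
    intro r hr
    have hr' : r ≤ i - k := by simp only [Finset.mem_range] at hr; omega
    have hchoose : (i.choose (k + r) : ℝ) * ((k + r).choose k : ℝ)
        = (i.choose k : ℝ) * ((i - k).choose r : ℝ) := by
      have := Nat.choose_mul (n := i) (show k ≤ k + r by omega)
      have h2 : i - k - (k + r - k) = i - k - r := by omega
      rw [← Nat.cast_mul, this, Nat.add_sub_cancel_left, Nat.cast_mul]
    have hsub : i - (k + r) = (i - k) - r := by omega
    have hsub2 : (k + r) - k = r := by omega
    rw [hsub, hsub2]
    linear_combination (a r * q (t - 1) (i - k - r) * y ^ k) * hchoose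
  rw [Finset.sum_congr rfl hterm, ← Finset.mul_sum, Finset.range_eq_Ico]
  have := hstep (t - 1) (i - k)
  rw [sub_add_cancel] at this
  rw [← this]
  ring

/-- Time-space harmonic polynomials for random walks: with `S_n = M_1 + ⋯ + M_n` a random
walk with i.i.d. increments having all moments, `q_j(t) = ∑_{λ ⊢ j} (t)_{ν_λ} d_λ a_λ` and
`Q_i(x, n) = ∑_{j=0}^{i} binom(i,j) q_{i−j}(−n) x^j`, the process `(Q_i(S_n, n))_n` is a
martingale with respect to the natural filtration of `(S_n)`; in particular
`E[Q_i(S_n, n) | F_s] = Q_i(S_s, s)` a.s. for `s ≤ n`, and `E[Q_i(S_n, n)] = 0` for `n ≥ 1`. -/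
theorem time_space_harmonic_random_walk {Ω : Type*} {mΩ : MeasurableSpace Ω}
    (μ : Measure Ω) [IsProbabilityMeasure μ]
    (M : ℕ → Ω → ℝ) (hMmeas : ∀ k, Measurable (M k))
    (hindep : iIndepFun M μ)
    (hident : ∀ k, IdentDistrib (M k) (M 0) μ μ)
    (hmom : ∀ j : ℕ, Integrable (fun ω => |M 0 ω| ^ j) μ)
    (a : ℕ → ℝ) (ha : ∀ j, a j = ∫ ω, (M 0 ω) ^ j ∂μ)
    (S : ℕ → Ω → ℝ) (hS : ∀ n ω, S n ω = ∑ k ∈ Finset.range n, M k ω)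
    (hSm : ∀ n, StronglyMeasurable (S n))
    (q : ℤ → ℕ → ℝ)
    (hq : ∀ (t : ℤ) (j : ℕ), q t j = ∑ lam : Nat.Partition j,
      (descPochhammer ℝ lam.parts.card).eval ((t : ℝ)) * dcoef lam * (lam.parts.map a).prod)
    (Q : ℕ → ℕ → ℝ → ℝ)
    (hQ : ∀ (i n : ℕ) (x : ℝ), Q i n x =
      ∑ j ∈ Finset.range (i + 1), (i.choose j : ℝ) * q (-(n : ℤ)) (i - j) * x ^ j)
    (i : ℕ) (hi : 1 ≤ i) :
    Martingale (fun n ω => Q i n (S n ω)) (Filtration.natural S hSm) μ ∧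
    (∀ s n : ℕ, s ≤ n →
      μ[(fun ω => Q i n (S n ω)) | (Filtration.natural S hSm) s]
        =ᵐ[μ] fun ω => Q i s (S s ω)) ∧
    (∀ n : ℕ, 1 ≤ n → ∫ ω, Q i n (S n ω) ∂μ = 0) := by
  set ℱ := Filtration.natural S hSm with hℱ
  -- basic consequences
  have ha0 : a 0 = 1 := by rw [ha]; simp
  have hM0int : ∀ p : ℕ, Integrable (fun ω => M 0 ω ^ p) μ := by
    intro p
    refine (hmom p).mono' ((hMmeas 0).pow_const p).aestronglyMeasurable ?_
    filter_upwards with ω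
    rw [Real.norm_eq_abs, abs_pow]
  have hMkint : ∀ k p : ℕ, Integrable (fun ω => M k ω ^ p) μ := by
    intro k p
    exact ((hident k).comp (measurable_id.pow_const p)).integrable_iff.2 (hM0int p)
  have haMk : ∀ k p : ℕ, ∫ ω, M k ω ^ p ∂μ = a p := by
    intro k p
    rw [ha]
    exact ((hident k).comp (measurable_id.pow_const p)).integral_eq
  have hSsucc : ∀ (n : ℕ) (ω : Ω), S (n + 1) ω = S n ω + M n ω := by
    intro n ω; rw [hS, hS, Finset.sum_range_succ]
  have hSMindep : ∀ n : ℕ, IndepFun (S n) (M n) μ := by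
    intro n
    have h1 : IndepFun (∑ k ∈ Finset.range n, M k) (M n) μ :=
      hindep.indepFun_finsetSum_of_notMem hMmeas Finset.notMem_range_self
    have he : S n = ∑ k ∈ Finset.range n, M k := by
      funext ω; rw [hS]; simp [Finset.sum_apply]
    rwa [he]
  -- integrability of powers and mixed products
  have hSint : ∀ j : ℕ, ∀ n : ℕ, Integrable (fun ω => S n ω ^ j) μ := by
    suffices h : ∀ n : ℕ, ∀ j : ℕ, Integrable (fun ω => S n ω ^ j) μ by
      intro j n; exact h n j
    intro n
    induction n with
    | zero =>
      intro j
      have : (fun ω => S 0 ω ^ j) = fun _ => (0 : ℝ) ^ j := by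
        funext ω; rw [hS]; simp
      rw [this]; exact integrable_const _
    | succ n ih =>
      intro j
      have heq : (fun ω => S (n + 1) ω ^ j)
          = fun ω => ∑ k ∈ Finset.range (j + 1),
              S n ω ^ k * M n ω ^ (j - k) * (j.choose k : ℝ) := by
        funext ω; rw [hSsucc n ω, add_pow]
      rw [heq]
      apply integrable_finset_sum
      intro k _
      have hip : IndepFun (fun ω => S n ω ^ k) (fun ω => M n ω ^ (j - k)) μ :=
        (hSMindep n).comp (measurable_id.pow_const k) (measurable_id.pow_const (j - k))
      exact (hip.integrable_mul (ih k) (hMkint n (j - k))).mul_const _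
  have hSMint : ∀ (n j p : ℕ), Integrable (fun ω => S n ω ^ j * M n ω ^ p) μ := by
    intro n j p
    have hip : IndepFun (fun ω => S n ω ^ j) (fun ω => M n ω ^ p) μ :=
      (hSMindep n).comp (measurable_id.pow_const j) (measurable_id.pow_const p)
    exact hip.integrable_mul (hSint j n) (hMkint n p)
  -- measurability wrt the filtration
  have hSnat : ∀ n, StronglyMeasurable[ℱ n] (S n) := fun n =>
    (Filtration.stronglyAdapted_natural hSm) n
  have hadp : StronglyAdapted ℱ (fun n ω => Q i n (S n ω)) := by
    intro n
    have h1 : StronglyMeasurable[ℱ n] fun ω =>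
        ∑ j ∈ Finset.range (i + 1), (i.choose j : ℝ) * q (-(n : ℤ)) (i - j) * S n ω ^ j := by
      apply Measurable.stronglyMeasurable
      exact Finset.measurable_sum _ fun j _ =>
        (((hSnat n).measurable.pow_const j).const_mul _)
    have h2 : (fun ω => Q i n (S n ω)) = fun ω =>
        ∑ j ∈ Finset.range (i + 1), (i.choose j : ℝ) * q (-(n : ℤ)) (i - j) * S n ω ^ j := by
      funext ω; rw [hQ]
    show StronglyMeasurable[ℱ n] fun ω => Q i n (S n ω)
    rw [h2]; exact h1
  have hQint : ∀ n, Integrable (fun ω => Q i n (S n ω)) μ := by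
    intro n
    have h2 : (fun ω => Q i n (S n ω)) = fun ω =>
        ∑ j ∈ Finset.range (i + 1), (i.choose j : ℝ) * q (-(n : ℤ)) (i - j) * S n ω ^ j := by
      funext ω; rw [hQ]
    rw [h2]
    exact integrable_finset_sum _ fun j _ => (hSint j n).const_mul _
  -- the one-step recurrence for q
  have hq_step : ∀ (t : ℤ) (m : ℕ),
      q (t + 1) m = ∑ r ∈ Finset.range (m + 1), (m.choose r : ℝ) * a r * q t (m - r) := by
    intro t m
    have h1 : ((t + 1 : ℤ) : ℝ) = (t : ℝ) + 1 := by push_cast; ring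
    rw [hq, h1, qpoly_step a ha0 m (t : ℝ)]
    refine Finset.sum_congr rfl fun r _ => ?_
    rw [hq]
  -- independence of M n from ℱ n
  have hindep_n : ∀ n : ℕ, Indep (MeasurableSpace.comap (M n) inferInstance) (ℱ n) μ := by
    intro n
    have hiI : iIndep (fun k => MeasurableSpace.comap (M k) inferInstance) μ :=
      (iIndepFun_iff_iIndep _ _ _).1 hindep
    have hdisj : Disjoint ({n} : Set ℕ) (Set.Iio n) := by
      simp [Set.disjoint_left]
    have hind0 : Indep (⨆ k ∈ ({n} : Set ℕ), MeasurableSpace.comap (M k) inferInstance)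
        (⨆ k ∈ Set.Iio n, MeasurableSpace.comap (M k) inferInstance) μ :=
      indep_iSup_of_disjoint (fun k => (hMmeas k).comap_le) hiI hdisj
    have h1 : (⨆ k ∈ ({n} : Set ℕ), MeasurableSpace.comap (M k) inferInstance)
        = MeasurableSpace.comap (M n) inferInstance := by
      simp
    rw [h1] at hind0
    refine indep_of_indep_of_le_right hind0 ?_
    refine iSup₂_le fun j hj => ?_
    refine Measurable.comap_le ?_
    have hMk : ∀ k, k < n →
        Measurable[⨆ k ∈ Set.Iio n, MeasurableSpace.comap (M k) inferInstance] (M k) := by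
      intro k hk
      exact Measurable.of_comap_le (le_biSup (fun k => MeasurableSpace.comap (M k) inferInstance) (Set.mem_Iio.2 hk))
    have hsum : Measurable[⨆ k ∈ Set.Iio n, MeasurableSpace.comap (M k) inferInstance]
        fun ω => ∑ k ∈ Finset.range j, M k ω := by
      apply Finset.measurable_sum
      intro k hk
      exact hMk k (lt_of_lt_of_le (Finset.mem_range.1 hk) hj)
    have hSj : S j = fun ω => ∑ k ∈ Finset.range j, M k ω := funext fun ω => hS j ω
    rw [hSj]
    exact hsum
  -- conditional expectation of powers of M n
  have hcondM : ∀ (n p : ℕ),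
      μ[(fun ω => M n ω ^ p) | ℱ n] =ᵐ[μ] fun _ => a p := by
    intro n p
    have hMn : Measurable[MeasurableSpace.comap (M n) inferInstance] (M n) :=
      Measurable.of_comap_le le_rfl
    have hsm : StronglyMeasurable[MeasurableSpace.comap (M n) inferInstance]
        (fun ω => M n ω ^ p) := (hMn.pow_const p).stronglyMeasurable
    have h := condExp_indep_eq ((hMmeas n).comap_le) (ℱ.le n) hsm (hindep_n n)
    rw [show (μ[fun ω => M n ω ^ p] : ℝ) = a p from haMk n p] at h
    exact h
  -- the martingale step
  have hstepn : ∀ n : ℕ,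
      μ[(fun ω => Q i (n + 1) (S (n + 1) ω)) | ℱ n] =ᵐ[μ] fun ω => Q i n (S n ω) := by
    intro n
    set σF : Finset ((_ : ℕ) × ℕ) :=
      (Finset.range (i + 1)).sigma (fun j => Finset.range (j + 1)) with hσF
    set c : ((_ : ℕ) × ℕ) → ℝ := fun p =>
      (i.choose p.1 : ℝ) * q (-(n : ℤ) - 1) (i - p.1) * (p.1.choose p.2 : ℝ) with hc
    have hFdecomp : (fun ω => Q i (n + 1) (S (n + 1) ω))
        = ∑ p ∈ σF, c p • (fun ω => S n ω ^ p.2 * M n ω ^ (p.1 - p.2)) := by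
      funext ω
      rw [hQ]
      have hcast : (-((n : ℕ) + 1 : ℕ) : ℤ) = -(n : ℤ) - 1 := by push_cast; ring
      rw [Finset.sum_apply]
      rw [Finset.sum_sigma]
      refine Finset.sum_congr rfl fun j _ => ?_
      rw [hSsucc n ω, add_pow, Finset.mul_sum]
      refine Finset.sum_congr rfl fun k _ => ?_
      simp only [Pi.smul_apply, smul_eq_mul, hc, hcast]
      ring
    rw [hFdecomp]
    have hint : ∀ p ∈ σF,
        Integrable (c p • (fun ω => S n ω ^ p.2 * M n ω ^ (p.1 - p.2))) μ :=
      fun p _ => (hSMint n p.2 (p.1 - p.2)).smul (c p)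
    refine (condExp_finsetSum hint (ℱ n)).trans ?_
    have hterm : ∀ p ∈ σF,
        μ[c p • (fun ω => S n ω ^ p.2 * M n ω ^ (p.1 - p.2)) | ℱ n]
          =ᵐ[μ] fun ω => c p * (S n ω ^ p.2 * a (p.1 - p.2)) := by
      intro p _
      refine (condExp_smul (c p) _ (ℱ n)).trans ?_
      have hmul : μ[(fun ω => S n ω ^ p.2) * (fun ω => M n ω ^ (p.1 - p.2)) | ℱ n]
          =ᵐ[μ] (fun ω => S n ω ^ p.2) * μ[(fun ω => M n ω ^ (p.1 - p.2)) | ℱ n] := by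
        refine condExp_mul_of_stronglyMeasurable_left
          (((hSnat n).measurable.pow_const p.2).stronglyMeasurable) ?_ (hMkint n (p.1 - p.2))
        exact hSMint n p.2 (p.1 - p.2)
      have h2 := hmul.trans (Filter.EventuallyEq.mul (ae_eq_refl (fun ω => S n ω ^ p.2)) (hcondM n (p.1 - p.2)))
      calc (c p • μ[(fun ω => S n ω ^ p.2 * M n ω ^ (p.1 - p.2)) | ℱ n] : Ω → ℝ)
          =ᵐ[μ] c p • (fun ω => S n ω ^ p.2 * a (p.1 - p.2)) := by
            filter_upwards [h2] with ω hω
            simp only [Pi.smul_apply, smul_eq_mul]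
            rw [show (fun ω => S n ω ^ p.2 * M n ω ^ (p.1 - p.2))
              = (fun ω => S n ω ^ p.2) * (fun ω => M n ω ^ (p.1 - p.2)) from rfl, hω]
            rfl
        _ = fun ω => c p * (S n ω ^ p.2 * a (p.1 - p.2)) := rfl
    refine (eventuallyEq_sum hterm).trans ?_
    have hfinal : (∑ p ∈ σF, fun ω => c p * (S n ω ^ p.2 * a (p.1 - p.2)))
        = fun ω => Q i n (S n ω) := by
      funext ω
      rw [Finset.sum_apply, hQ, hσF, Finset.sum_sigma]
      have hk := key_identity a q hq_step i (-(n : ℤ)) (S n ω)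
      rw [← hk]
      refine Finset.sum_congr rfl fun j _ => Finset.sum_congr rfl fun k _ => ?_
      simp only [hc]
      ring
    rw [hfinal]
  have hmart : Martingale (fun n ω => Q i n (S n ω)) ℱ μ :=
    martingale_nat hadp hQint fun n => (hstepn n).symm
  refine ⟨hmart, fun s n hsn => hmart.condExp_ae_eq hsn, ?_⟩
  -- the expectation is zero
  intro n _
  have hq0 : q 0 i = 0 := by
    rw [hq]
    refine Finset.sum_eq_zero fun lam _ => ?_
    have hne : lam.parts ≠ 0 := by
      intro h
      have := lam.parts_sum
      rw [h] at this
      simp at this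
      omega
    obtain ⟨c, hc⟩ : ∃ c, lam.parts.card = c + 1 := by
      have := Multiset.card_pos.2 hne
      exact ⟨lam.parts.card - 1, by omega⟩
    rw [hc, descPochhammer_succ_left]
    simp
  have hf0 : (fun ω => Q i 0 (S 0 ω)) = fun _ => (0 : ℝ) := by
    funext ω
    have hS0 : S 0 ω = 0 := by rw [hS]; simp
    rw [hQ, hS0]
    refine Finset.sum_eq_zero fun j hj => ?_
    rcases Nat.eq_zero_or_pos j with rfl | hjpos
    · simp only [Nat.cast_zero, neg_zero, pow_zero, mul_one, Nat.sub_zero, Nat.choose_zero_right,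
        Nat.cast_one, one_mul]
      exact hq0
    · rw [zero_pow (by omega)]
      ring
  have h0 := hmart.condExp_ae_eq (Nat.zero_le n)
  have hint := hQint n
  calc ∫ ω, Q i n (S n ω) ∂μ
      = ∫ ω, (μ[(fun ω => Q i n (S n ω)) | ℱ 0]) ω ∂μ := (integral_condExp (ℱ.le 0)).symm
    _ = ∫ ω, Q i 0 (S 0 ω) ∂μ := integral_congr_ae h0
    _ = 0 := by rw [hf0]; simp
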